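/- Suppose t(i,j) satisfies t(i,0) = c for all i ≥ 0, Pascal's rule t(i,j)=t(i-1,j-1)+t(i-1,j) for 2 ≤ i, 1 ≤ j ≤ i-1, and boundary values t(i,i) = a_i for i ≥ 1 (with t(0,0)=c). Then for 1 ≤ j ≤ i-1, t(i,j) = c·Σ_{p=0}^{i-j-1} C(i-2-p, j-1) + Σ_{q=0}^{j-1} C(i-2-q, j-1-q)·a_{q+1}. -/

import Mathlib

private lemma L1 (m k : ℕ) : ∑ p ∈ Finset.range (m+2), (k+m+2-p).choose (k+1) =
    (∑ p ∈ Finset.range (m+2), (k+m+1-p).choose k) +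
    ∑ p ∈ Finset.range (m+1), (k+m+1-p).choose (k+1) := by
  have h : ∀ p ∈ Finset.range (m+2), (k+m+2-p).choose (k+1)
      = (k+m+1-p).choose k + (k+m+1-p).choose (k+1) := by
    intro p hp
    rw [Finset.mem_range] at hp
    have e : k+m+2-p = (k+m+1-p)+1 := by omega
    rw [e, Nat.choose_succ_succ]
  rw [Finset.sum_congr rfl h, Finset.sum_add_distrib]
  congr 1
  rw [Finset.sum_range_succ]
  have e : k+m+1-(m+1) = k := by omega
  rw [e, Nat.choose_succ_self, add_zero]

private lemma L2 (a : ℕ → ℝ) (m k : ℕ) :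
    ∑ q ∈ Finset.range (k+2), ((k+m+2-q).choose (k+1-q) : ℝ) * a (q+1) =
    (∑ q ∈ Finset.range (k+1), ((k+m+1-q).choose (k-q) : ℝ) * a (q+1)) +
    ∑ q ∈ Finset.range (k+2), ((k+m+1-q).choose (k+1-q) : ℝ) * a (q+1) := by
  rw [Finset.sum_range_succ, Finset.sum_range_succ ((fun q => ((k+m+1-q).choose (k+1-q) : ℝ) * a (q+1))) (k+1)]
  have h1 : k+m+2-(k+1) = m+1 := by omega
  have h2 : k+1-(k+1) = 0 := by omega
  have h3 : k+m+1-(k+1) = m := by omega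
  rw [h1, h2, h3]
  have h : ∀ q ∈ Finset.range (k+1), ((k+m+2-q).choose (k+1-q) : ℝ) * a (q+1)
      = ((k+m+1-q).choose (k-q) : ℝ) * a (q+1) + ((k+m+1-q).choose (k+1-q) : ℝ) * a (q+1) := by
    intro q hq
    rw [Finset.mem_range] at hq
    have e1 : k+m+2-q = (k+m+1-q)+1 := by omega
    have e2 : k+1-q = (k-q)+1 := by omega
    rw [e1, e2, Nat.choose_succ_succ]
    push_cast
    ring
  rw [Finset.sum_congr rfl h, Finset.sum_add_distrib]
  simp [Nat.choose_zero_right]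
  ring

private lemma aux (t : ℕ → ℕ → ℝ) (c : ℝ) (a : ℕ → ℝ)
    (hconst : ∀ i : ℕ, t i 0 = c)
    (hpascal : ∀ i j : ℕ, 2 ≤ i → 1 ≤ j → j ≤ i - 1 → t i j = t (i - 1) (j - 1) + t (i - 1) j)
    (hdiag : ∀ i : ℕ, 1 ≤ i → t i i = a i) :
    ∀ n m k : ℕ, m + k = n →
      t (k+m+2) (k+1) = c * ∑ p ∈ Finset.range (m+1), ((k+m-p).choose k : ℝ) +
        ∑ q ∈ Finset.range (k+1), ((k+m-q).choose (k-q) : ℝ) * a (q+1) := by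
  intro n
  induction n with
  | zero =>
    intro m k hmk
    obtain ⟨rfl, rfl⟩ : m = 0 ∧ k = 0 := by omega
    have hp := hpascal 2 1 (by omega) (by omega) (by omega)
    norm_num at hp
    simp [hp, hconst 1, hdiag 1 (by omega)]
  | succ n ih =>
    intro m k hmk
    have hp := hpascal (k+m+2) (k+1) (by omega) (by omega) (by omega)
    have e1 : k+m+2-1 = k+m+1 := by omega
    have e2 : k+1-1 = k := by omega
    rw [e1, e2] at hp
    match m, k with
    | 0, 0 => omega
    | 0, k'+1 =>
      have ihk := ih 0 k' (by omega)
      simp only [Nat.add_zero] at ihk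
      have hd := hdiag (k'+2) (by omega)
      simp only [show k'+1+0+2 = k'+3 by omega, show k'+1+0+1 = k'+2 by omega,
        show k'+1+1 = k'+2 by omega, show k'+1+0 = k'+1 by omega,
        show (0:ℕ)+1 = 1 by omega] at hp ⊢
      rw [hp, hd, ihk]
      rw [Finset.sum_range_one, Finset.sum_range_one, Nat.sub_zero, Nat.sub_zero,
        Nat.choose_self, Nat.choose_self,
        Finset.sum_range_succ (fun q => ((k'+1-q).choose (k'+1-q) : ℝ) * a (q+1)) (k'+1)]
      have hs : ∀ K : ℕ, ∑ q ∈ Finset.range (k'+1), ((K-q).choose (K-q) : ℝ) * a (q+1)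
          = ∑ q ∈ Finset.range (k'+1), a (q+1) := by
        intro K
        apply Finset.sum_congr rfl
        intro q hq
        rw [Nat.choose_self]
        norm_num
      rw [hs k', hs (k'+1), Nat.sub_self, Nat.choose_self]
      push_cast
      ring
    | m'+1, 0 =>
      have ihm := ih m' 0 (by omega)
      simp only [Nat.zero_add] at ihm
      simp only [show (0:ℕ)+(m'+1)+2 = m'+3 by omega, show (0:ℕ)+(m'+1)+1 = m'+2 by omega,
        show (0:ℕ)+(m'+1) = m'+1 by omega, show (0:ℕ)+1 = 1 by omega] at hp ⊢
      rw [hp, hconst (m'+2), ihm]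
      have hs : ∀ M : ℕ, ∑ p ∈ Finset.range (M+1), ((M-p).choose 0 : ℝ) = (M+1 : ℝ) := by
        intro M
        have : ∀ p ∈ Finset.range (M+1), ((M-p).choose 0 : ℝ) = 1 := by
          intro p hp
          rw [Nat.choose_zero_right]
          norm_num
        rw [Finset.sum_congr rfl this, Finset.sum_const, Finset.card_range]
        ring
      rw [show m'+1+1 = m'+1+1 from rfl]
      rw [hs m', show Finset.range (m'+1+1) = Finset.range (m'+1+1) from rfl]
      rw [show (∑ p ∈ Finset.range (m'+1+1), ((m'+1-p).choose 0 : ℝ)) = ((m'+1:ℕ)+1 : ℝ) from hs (m'+1)]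
      rw [Finset.sum_range_one, Finset.sum_range_one, Nat.sub_zero, Nat.sub_zero,
        Nat.sub_zero, Nat.choose_zero_right, Nat.choose_zero_right]
      push_cast
      ring
    | m'+1, k'+1 =>
      have ih1 := ih (m'+1) k' (by omega)
      have ih2 := ih m' (k'+1) (by omega)
      simp only [show k'+(m'+1) = k'+m'+1 by omega, show k'+1+m' = k'+m'+1 by omega,
        show k'+1+(m'+1) = k'+m'+2 by omega, show k'+1+1 = k'+2 by omega,
        show m'+1+1 = m'+2 by omega, show k'+m'+1+2 = k'+m'+3 by omega,
        show k'+m'+1+1 = k'+m'+2 by omega,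
        show k'+m'+2+2 = k'+m'+4 by omega, show k'+m'+2+1 = k'+m'+3 by omega] at ih1 ih2 hp ⊢
      rw [hp, ih1, ih2]
      have hl1 := congrArg (Nat.cast : ℕ → ℝ) (L1 m' k')
      push_cast at hl1
      have hl2 := L2 a m' k'
      rw [hl1, hl2]
      ring

theorem stmt_17 (t : ℕ → ℕ → ℝ) (c : ℝ) (a : ℕ → ℝ)
    (hconst : ∀ i : ℕ, t i 0 = c)
    (hpascal : ∀ i j : ℕ, 2 ≤ i → 1 ≤ j → j ≤ i - 1 → t i j = t (i - 1) (j - 1) + t (i - 1) j)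
    (hdiag : ∀ i : ℕ, 1 ≤ i → t i i = a i)
    (i j : ℕ) (hj1 : 1 ≤ j) (hj2 : j ≤ i - 1) :
    t i j = c * ∑ p ∈ Finset.range (i - j), ((i - 2 - p).choose (j - 1) : ℝ) +
      ∑ q ∈ Finset.range j, ((i - 2 - q).choose (j - 1 - q) : ℝ) * a (q + 1) := by
  have hi : 2 ≤ i := by omega
  obtain ⟨k, rfl⟩ : ∃ k, j = k+1 := ⟨j-1, by omega⟩
  obtain ⟨m, rfl⟩ : ∃ m, i = k+m+2 := ⟨i-k-2, by omega⟩
  have h := aux t c a hconst hpascal hdiag (m+k) m k rfl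
  simp only [show k+m+2-(k+1) = m+1 by omega, show k+m+2-2 = k+m by omega,
    show k+1-1 = k by omega]
  exact h
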